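/- The map F is strictly monotone on 𝔾: for all C, C̃ ∈ 𝔾 with C ≠ C̃, one has (F(C) − F(C̃)) · (C − C̃) > 0, where · denotes the Euclidean inner product on ℝ^n. -/

import Mathlib

open MeasureTheory Set
open scoped Classical

/-- `f_j^{(C)}(t) = C_j - (t - x_j)^2`. -/
noncomputable def fj (n : ℕ) (x C : Fin n → ℝ) (j : Fin n) (t : ℝ) : ℝ :=
  C j - (t - x j) ^ 2

/-- `f^{(C)}(t) = max{f_1^{(C)}(t), …, f_n^{(C)}(t), 0}`. -/
noncomputable def fmax (n : ℕ) (x C : Fin n → ℝ) (t : ℝ) : ℝ :=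
  max (⨆ j : Fin n, fj n x C j t) 0

/-- `E_j^{(C)} = {t : f_j^{(C)}(t) = f^{(C)}(t)}`. -/
def Ej (n : ℕ) (x C : Fin n → ℝ) (j : Fin n) : Set ℝ :=
  {t | fj n x C j t = fmax n x C t}

/-- `F_j(C) = ∫_{E_j^{(C)}} f^{(C)}` if `E_j^{(C)} ≠ ∅`, else `0`. -/
noncomputable def Fj (n : ℕ) (x C : Fin n → ℝ) (j : Fin n) : ℝ :=
  if (Ej n x C j).Nonempty then ∫ t in Ej n x C j, fmax n x C t else 0

/-- `F(C) = (F_1(C), …, F_n(C))`. -/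
noncomputable def Fvec (n : ℕ) (x C : Fin n → ℝ) : Fin n → ℝ :=
  fun j => Fj n x C j

/-- `𝔾 = {C : F_j(C) > 0 for all j}`. -/
def Gset (n : ℕ) (x : Fin n → ℝ) : Set (Fin n → ℝ) :=
  {C | ∀ j, 0 < Fj n x C j}

/-- `γ_{ij}(C) = (C_i - C_j)/(2(x_j - x_i)) + (x_i + x_j)/2`. -/
noncomputable def gam (n : ℕ) (x C : Fin n → ℝ) (i j : Fin n) : ℝ :=
  (C i - C j) / (2 * (x j - x i)) + (x i + x j) / 2

section Aux
variable {n : ℕ} {x C C' : Fin n → ℝ}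

lemma fj_cont (j : Fin n) : Continuous (fun t => fj n x C j t) := by
  unfold fj; fun_prop

lemma fmax_nonneg (t : ℝ) : 0 ≤ fmax n x C t := le_max_right _ _

lemma fj_le_fmax [Nonempty (Fin n)] (j : Fin n) (t : ℝ) : fj n x C j t ≤ fmax n x C t :=
  le_trans (le_ciSup (f := fun k => fj n x C k t) (Set.Finite.bddAbove (Set.finite_range _)) j)
    (le_max_left _ _)

lemma fmax_cont [Nonempty (Fin n)] : Continuous (fmax n x C) := by
  have h1 : Continuous (fun t => ⨆ j : Fin n, fj n x C j t) := by
    have := Continuous.finset_sup'_apply (f := fun j : Fin n => fun t => fj n x C j t)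
      Finset.univ_nonempty (fun i _ => fj_cont i)
    convert this using 2 with t
    exact (Finset.sup'_univ_eq_ciSup _).symm
  exact h1.max continuous_const

lemma exists_mem_Ej [Nonempty (Fin n)] {t : ℝ} (ht : 0 < fmax n x C t) :
    ∃ j, t ∈ Ej n x C j := by
  obtain ⟨j, hj⟩ := Finset.exists_max_image Finset.univ (fun j => fj n x C j t)
    Finset.univ_nonempty
  refine ⟨j, ?_⟩
  have hsup : (⨆ k : Fin n, fj n x C k t) = fj n x C j t :=
    le_antisymm (ciSup_le fun k => hj.2 k (Finset.mem_univ k))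
      (le_ciSup (f := fun k => fj n x C k t) (Set.Finite.bddAbove (Set.finite_range _)) j)
  have : fmax n x C t = fj n x C j t := by
    unfold fmax at ht ⊢
    rcases max_cases (⨆ k : Fin n, fj n x C k t) 0 with ⟨h1, h2⟩ | ⟨h1, h2⟩
    · rw [h1, hsup]
    · rw [h1] at ht; exact absurd ht (lt_irrefl 0)
  exact this.symm

lemma fmax_compact [Nonempty (Fin n)] : HasCompactSupport (fmax n x C) := by
  set M : ℝ := (Finset.univ.sup' Finset.univ_nonempty
    fun j : Fin n => |x j| + Real.sqrt |C j|) + 1 with hM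
  apply HasCompactSupport.intro (isCompact_Icc (a := -M) (b := M))
  intro t ht
  simp only [mem_Icc, not_and_or, not_le] at ht
  have key : ∀ j : Fin n, fj n x C j t ≤ 0 := by
    intro j
    have hle := Finset.le_sup' (fun j : Fin n => |x j| + Real.sqrt |C j|) (Finset.mem_univ j)
    have h1 : |x j| + Real.sqrt |C j| + 1 ≤ M := by rw [hM]; linarith
    have hs : Real.sqrt |C j| ^ 2 = |C j| := Real.sq_sqrt (abs_nonneg _)
    have hs0 : 0 ≤ Real.sqrt |C j| := Real.sqrt_nonneg _
    have ha1 : x j ≤ |x j| := le_abs_self _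
    have ha2 : -|x j| ≤ x j := neg_abs_le _
    have hC : C j ≤ |C j| := le_abs_self _
    unfold fj
    rcases ht with ht | ht
    · nlinarith [sq_nonneg (t - x j + Real.sqrt |C j|)]
    · nlinarith [sq_nonneg (t - x j - Real.sqrt |C j|)]
  exact max_eq_right (ciSup_le key)

lemma fmax_integrable [Nonempty (Fin n)] : Integrable (fmax n x C) :=
  fmax_cont.integrable_of_hasCompactSupport fmax_compact

lemma Ej_meas [Nonempty (Fin n)] (j : Fin n) : MeasurableSet (Ej n x C j) :=
  (isClosed_eq (fj_cont j) fmax_cont).measurableSet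

lemma Ej_inter_subsingleton (hx : StrictMono x) {j k : Fin n} (hjk : j ≠ k) :
    (Ej n x C j ∩ Ej n x C k).Subsingleton := by
  intro a ha b hb
  have hxjk : x j ≠ x k := fun h => hjk (hx.injective h)
  have h1 : fj n x C j a = fj n x C k a := ha.1.trans ha.2.symm
  have h2 : fj n x C j b = fj n x C k b := hb.1.trans hb.2.symm
  unfold fj at h1 h2
  have : (a - b) * (x k - x j) = 0 := by ring_nf; ring_nf at h1 h2; linarith
  rcases mul_eq_zero.mp this with h | h
  · linarith
  · exact absurd (by linarith : x j = x k) hxjk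

lemma Ej_inter_null (hx : StrictMono x) {j k : Fin n} (hjk : j ≠ k) :
    volume (Ej n x C j ∩ Ej n x C k) = 0 :=
  ((Ej_inter_subsingleton (C := C) hx hjk).finite).measure_zero _

/-- a.e., every point belongs to at most one `Ej`. -/
lemma ae_unique_Ej [Nonempty (Fin n)] (hx : StrictMono x) :
    ∀ᵐ t ∂(volume : Measure ℝ), ∀ j k : Fin n, j ≠ k →
      ¬(t ∈ Ej n x C j ∧ t ∈ Ej n x C k) := by
  have hN : volume (⋃ p : {p : Fin n × Fin n // p.1 ≠ p.2},
      (Ej n x C p.1.1 ∩ Ej n x C p.1.2)) = 0 :=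
    measure_iUnion_null fun p => Ej_inter_null hx p.2
  have := measure_eq_zero_iff_ae_notMem.mp hN
  filter_upwards [this] with t ht j k hjk hmem
  exact ht (Set.mem_iUnion.mpr ⟨⟨(j, k), hjk⟩, ⟨hmem.1, hmem.2⟩⟩)

/-- Sum of set integrals over the `Ej` of a function vanishing where `fmax = 0`
equals the full integral. -/
lemma sum_setIntegral_eq [Nonempty (Fin n)] (hx : StrictMono x) (h : ℝ → ℝ)
    (hh : Integrable h) (hvanish : ∀ t, fmax n x C t = 0 → h t = 0) :
    ∑ j : Fin n, ∫ t in Ej n x C j, h t = ∫ t, h t := by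
  have hind : ∀ j : Fin n, ∫ t in Ej n x C j, h t
      = ∫ t, (Ej n x C j).indicator h t := fun j =>
    (integral_indicator (Ej_meas j)).symm
  have haeq : (fun t => ∑ j : Fin n, (Ej n x C j).indicator h t) =ᵐ[volume] h := by
    filter_upwards [ae_unique_Ej (C := C) hx] with t ht
    by_cases h0 : h t = 0
    · rw [h0]
      apply Finset.sum_eq_zero
      intro j _
      by_cases hj : t ∈ Ej n x C j
      · rw [Set.indicator_of_mem hj, h0]
      · exact Set.indicator_of_notMem hj _
    · have hg0 : 0 < fmax n x C t :=
        lt_of_le_of_ne (fmax_nonneg t) (fun hc => h0 (hvanish t hc.symm))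
      obtain ⟨j₀, hj₀⟩ := exists_mem_Ej hg0
      rw [Finset.sum_eq_single j₀]
      · exact Set.indicator_of_mem hj₀ _
      · intro k _ hk
        apply Set.indicator_of_notMem
        intro hkmem
        exact ht k j₀ hk ⟨hkmem, hj₀⟩
      · intro hj; exact absurd (Finset.mem_univ j₀) hj
  calc ∑ j : Fin n, ∫ t in Ej n x C j, h t
      = ∑ j : Fin n, ∫ t, (Ej n x C j).indicator h t := by
        exact Finset.sum_congr rfl fun j _ => hind j
    _ = ∫ t, ∑ j : Fin n, (Ej n x C j).indicator h t := by
        rw [integral_finset_sum]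
        intro j _
        exact hh.indicator (Ej_meas j)
    _ = ∫ t, h t := integral_congr_ae haeq

/-- If `fmax C = fmax C'` and `F_j(C) > 0` then `C j = C' j`. -/
lemma eq_of_fmax_eq [Nonempty (Fin n)] (hx : StrictMono x)
    (hgg : fmax n x C = fmax n x C') {j : Fin n} (hFj : 0 < Fj n x C j) :
    C j = C' j := by
  have hne : (Ej n x C j).Nonempty := by
    by_contra hc
    rw [Fj, if_neg hc] at hFj
    exact lt_irrefl 0 hFj
  have hint : 0 < ∫ t in Ej n x C j, fmax n x C t := by rwa [Fj, if_pos hne] at hFj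
  set S : Set ℝ := {t | t ∈ Ej n x C j ∧ 0 < fmax n x C t} with hS
  have hSne : ¬ volume S = 0 := by
    intro hvol
    have : (fun t => (Ej n x C j).indicator (fmax n x C) t) =ᵐ[volume] 0 := by
      filter_upwards [measure_eq_zero_iff_ae_notMem.mp hvol] with t ht
      by_cases hj : t ∈ Ej n x C j
      · rw [Set.indicator_of_mem hj]
        have : ¬ 0 < fmax n x C t := fun hc => ht ⟨hj, hc⟩
        exact le_antisymm (not_lt.mp this) (fmax_nonneg t)
      · exact Set.indicator_of_notMem hj _
    have h0 : ∫ t in Ej n x C j, fmax n x C t = 0 := by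
      rw [← integral_indicator (Ej_meas j), integral_congr_ae this]
      simp
    rw [h0] at hint; exact lt_irrefl 0 hint
  have hSinf : S.Infinite := by
    intro hfin
    exact hSne (hfin.measure_zero _)
  have hcover : S ⊆ ⋃ k : Fin n, {t ∈ S | fj n x C' k t = fmax n x C' t} := by
    intro t ht
    have : 0 < fmax n x C' t := by rw [← hgg]; exact ht.2
    obtain ⟨k, hk⟩ := exists_mem_Ej this
    exact Set.mem_iUnion.mpr ⟨k, ht, hk⟩
  have hexk : ∃ k : Fin n, {t ∈ S | fj n x C' k t = fmax n x C' t}.Infinite := by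
    by_contra hc
    push_neg at hc
    exact hSinf ((Set.finite_iUnion hc).subset hcover)
  obtain ⟨k, hk⟩ := hexk
  obtain ⟨a, ha, b, hb, hab⟩ := hk.nontrivial
  have key : ∀ t ∈ {t ∈ S | fj n x C' k t = fmax n x C' t},
      C j - (t - x j) ^ 2 = C' k - (t - x k) ^ 2 := by
    intro t ht
    have h1 : fj n x C j t = fmax n x C t := ht.1.1
    have h2 : fj n x C' k t = fmax n x C' t := ht.2
    have := h1.trans (by rw [hgg]); rw [← h2] at this
    unfold fj at this
    linarith [this]
  have hka := key a ha
  have hkb := key b hb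
  have hxx : x j = x k := by
    have : (a - b) * (x k - x j) = 0 := by nlinarith [hka, hkb]
    rcases mul_eq_zero.mp this with h | h
    · exact absurd (by linarith : a = b) hab
    · linarith
  have : j = k := hx.injective hxx
  subst this
  nlinarith [hka, hxx]

end Aux

/-- `F` is strictly monotone on `𝔾`. -/
theorem stmt_18 (n : ℕ) (hn : 1 ≤ n) (x : Fin n → ℝ) (hx : StrictMono x) :
    ∀ C ∈ Gset n x, ∀ C' ∈ Gset n x, C ≠ C' →
      0 < ∑ j, (Fj n x C j - Fj n x C' j) * (C j - C' j) := by
  have : Nonempty (Fin n) := Fin.pos_iff_nonempty.mp hn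
  intro C hC C' hC' hne
  set g : ℝ → ℝ := fmax n x C with hg
  set g' : ℝ → ℝ := fmax n x C' with hg'
  have hgc : Continuous g := fmax_cont
  have hgc' : Continuous g' := fmax_cont
  have hgcs : HasCompactSupport g := fmax_compact
  have hgcs' : HasCompactSupport g' := fmax_compact
  -- the two quadratic integrands
  set h : ℝ → ℝ := fun t => g t * (g t - g' t) with hh
  set h' : ℝ → ℝ := fun t => g' t * (g t - g' t) with hh'
  have hhint : Integrable h :=
    (hgc.mul (hgc.sub hgc')).integrable_of_hasCompactSupport
      (by exact hgcs.mul_right)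
  have hsubcs : HasCompactSupport (fun t => g t - g' t) := by
    have := hgcs.add (HasCompactSupport.neg hgcs')
    simpa [sub_eq_add_neg, Pi.add_def, Pi.neg_def] using this
  have hhint' : Integrable h' :=
    (hgc'.mul (hgc.sub hgc')).integrable_of_hasCompactSupport hsubcs.mul_left
  -- representation of Fj as set integrals
  have hFrep : ∀ j, Fj n x C j = ∫ t in Ej n x C j, g t := by
    intro j
    have hne' : (Ej n x C j).Nonempty := by
      by_contra hc
      have := hC j; rw [Fj, if_neg hc] at this; exact lt_irrefl 0 this
    rw [Fj, if_pos hne']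
  have hFrep' : ∀ j, Fj n x C' j = ∫ t in Ej n x C' j, g' t := by
    intro j
    have hne' : (Ej n x C' j).Nonempty := by
      by_contra hc
      have := hC' j; rw [Fj, if_neg hc] at this; exact lt_irrefl 0 this
    rw [Fj, if_pos hne']
  -- key pointwise inequalities integrated
  have keyA : ∀ j : Fin n, ∫ t in Ej n x C j, h t ≤ Fj n x C j * (C j - C' j) := by
    intro j
    rw [hFrep j, ← integral_mul_const]
    apply setIntegral_mono_on (hhint.integrableOn)
      ((fmax_integrable.integrableOn).mul_const _) (Ej_meas j)
    intro t ht
    have h1 : g t = C j - (t - x j) ^ 2 := by rw [hg, ← ht]; rfl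
    have h2 : C' j - (t - x j) ^ 2 ≤ g' t := fj_le_fmax j t
    have h3 : g t - g' t ≤ C j - C' j := by rw [h1]; linarith
    exact mul_le_mul_of_nonneg_left h3 (fmax_nonneg t)
  have keyB : ∀ j : Fin n, Fj n x C' j * (C j - C' j) ≤ ∫ t in Ej n x C' j, h' t := by
    intro j
    rw [hFrep' j, ← integral_mul_const]
    apply setIntegral_mono_on ((fmax_integrable.integrableOn).mul_const _)
      (hhint'.integrableOn) (Ej_meas j)
    intro t ht
    have h1 : g' t = C' j - (t - x j) ^ 2 := by rw [hg', ← ht]; rfl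
    have h2 : C j - (t - x j) ^ 2 ≤ g t := fj_le_fmax j t
    have h3 : C j - C' j ≤ g t - g' t := by rw [h1]; linarith
    exact mul_le_mul_of_nonneg_left h3 (fmax_nonneg t)
  -- sums of set integrals equal full integrals
  have hsumA : ∑ j : Fin n, ∫ t in Ej n x C j, h t = ∫ t, h t :=
    sum_setIntegral_eq hx h hhint (fun t hzero => by simp [hh, hg, hzero])
  have hsumB : ∑ j : Fin n, ∫ t in Ej n x C' j, h' t = ∫ t, h' t :=
    sum_setIntegral_eq hx h' hhint' (fun t hzero => by simp [hh', hg', hzero])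
  -- the difference of full integrals is ∫ (g - g')²
  have hsq : Integrable (fun t => (g t - g' t) ^ 2) :=
    ((hgc.sub hgc').mul (hgc.sub hgc')).integrable_of_hasCompactSupport
      (hsubcs.mul_right) |>.congr (Filter.EventuallyEq.of_eq (by funext t; simp only [Pi.mul_apply, Pi.sub_apply]; ring))
  have hdiff : (∫ t, h t) - ∫ t, h' t = ∫ t, (g t - g' t) ^ 2 := by
    rw [← integral_sub hhint hhint']
    apply integral_congr_ae
    apply Filter.EventuallyEq.of_eq
    funext t; simp only [hh, hh']; ring
  -- positivity of ∫ (g - g')²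
  have hpos : 0 < ∫ t, (g t - g' t) ^ 2 := by
    rcases lt_or_eq_of_le (integral_nonneg (f := fun t => (g t - g' t) ^ 2) (fun t => sq_nonneg _)) with hlt | heq
    · exact hlt
    · exfalso
      have hae : (fun t => (g t - g' t) ^ 2) =ᵐ[volume] 0 :=
        (integral_eq_zero_iff_of_nonneg (fun t => sq_nonneg _) hsq).mp heq.symm
      have hcont : Continuous (fun t => (g t - g' t) ^ 2) := by fun_prop
      have heverywhere : (fun t => (g t - g' t) ^ 2) = 0 :=
        (hcont.ae_eq_iff_eq volume continuous_const).mp hae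
      have hgconst : g = g' := by
        funext t
        have := congrFun heverywhere t
        simp only [Pi.zero_apply] at this
        nlinarith [this]
      have : C = C' := funext fun j => eq_of_fmax_eq hx hgconst (hC j)
      exact hne this
  -- assemble
  have expand : ∑ j, (Fj n x C j - Fj n x C' j) * (C j - C' j)
      = ∑ j, Fj n x C j * (C j - C' j) - ∑ j, Fj n x C' j * (C j - C' j) := by
    rw [← Finset.sum_sub_distrib]
    exact Finset.sum_congr rfl fun j _ => by ring
  rw [expand]
  have hA : ∫ t, h t ≤ ∑ j, Fj n x C j * (C j - C' j) := by
    rw [← hsumA]; exact Finset.sum_le_sum fun j _ => keyA j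
  have hB : ∑ j, Fj n x C' j * (C j - C' j) ≤ ∫ t, h' t := by
    rw [← hsumB]; exact Finset.sum_le_sum fun j _ => keyB j
  linarith [hdiff, hpos, hA, hB]
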